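/- Let n = 4r + 3. There do not exist two distinct commuting permutations φ₁, φ₂ of order 2 on a set of n elements, each of which is a product of 2r+1 disjoint transpositions with exactly one fixed point, such that φ₁φ₂ is also a product of 2r+1 disjoint transpositions with at most two fixed points. -/
import Mathlib


/-- Sign of a permutation whose cycle type is all 2's with odd multiset card is -1. -/
lemma sign_neg_of_all_two {n : ℕ} (σ : Equiv.Perm (Fin n)) (r : ℕ)
    (h2 : ∀ c ∈ σ.cycleType, c = 2) (hc : σ.cycleType.card = 2 * r + 1) :
    Equiv.Perm.sign σ = -1 := by
  have hrep : σ.cycleType = Multiset.replicate σ.cycleType.card 2 :=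
    Multiset.eq_replicate_card.2 h2
  have hsum : σ.cycleType.sum = σ.cycleType.card * 2 := by
    rw [hrep, Multiset.sum_replicate, Multiset.card_replicate, smul_eq_mul]
  rw [Equiv.Perm.sign_of_cycleType, hsum, hc]
  simp [pow_add, pow_mul]

/-- In S_{4r+3} there is no pair of distinct commuting involutions, each a product
of 2r+1 disjoint transpositions with exactly one fixed point, whose product is an
involution that is a product of 2r+1 disjoint transpositions with at most two
fixed points. -/
theorem no_D2_involution_pair (r : ℕ) :
    ¬ ∃ φ₁ φ₂ : Equiv.Perm (Fin (4 * r + 3)), φ₁ ≠ φ₂ ∧ Commute φ₁ φ₂ ∧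
      orderOf φ₁ = 2 ∧ orderOf φ₂ = 2 ∧
      (∀ c ∈ φ₁.cycleType, c = 2) ∧ (∀ c ∈ φ₂.cycleType, c = 2) ∧
      φ₁.cycleType.card = 2 * r + 1 ∧ φ₂.cycleType.card = 2 * r + 1 ∧
      (Finset.univ.filter fun x => φ₁ x = x).card = 1 ∧
      (Finset.univ.filter fun x => φ₂ x = x).card = 1 ∧
      orderOf (φ₁ * φ₂) = 2 ∧
      (∀ c ∈ (φ₁ * φ₂).cycleType, c = 2) ∧
      (φ₁ * φ₂).cycleType.card = 2 * r + 1 ∧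
      (Finset.univ.filter fun x => (φ₁ * φ₂) x = x).card ≤ 2 := by
  rintro ⟨φ₁, φ₂, -, -, -, -, h₁2, h₂2, h₁c, h₂c, -, -, -, h₁₂2, h₁₂c, -⟩
  have s₁ := sign_neg_of_all_two φ₁ r h₁2 h₁c
  have s₂ := sign_neg_of_all_two φ₂ r h₂2 h₂c
  have s₁₂ := sign_neg_of_all_two (φ₁ * φ₂) r h₁₂2 h₁₂c
  rw [map_mul, s₁, s₂] at s₁₂
  norm_num at s₁₂
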